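/- For every p ∈ [0.9, 1), one has r(1) = p - p² + 2·p²·ln 2·ln p < 0. Moreover the function p ↦ p - p² + 2p²·ln 2·ln p is strictly increasing on [0.9, 1) (its derivative 1 - 2p + 2p·ln 2 + 4p·ln 2·ln p is positive there) and tends to 0 as p → 1. -/

import Mathlib

private lemma deriv_pos_aux (p : ℝ) (hp : p ∈ Set.Ico (0.9:ℝ) 1) :
    0 < 1 - 2 * p + 2 * p * Real.log 2 + 4 * p * Real.log 2 * Real.log p := by
  obtain ⟨h9, h1⟩ := hp
  have hp0 : (0:ℝ) < p := by linarith [show (0.9:ℝ) ≤ p from h9, show (0:ℝ) < 0.9 by norm_num]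
  have hlog2 : (0.6931471803:ℝ) < Real.log 2 := Real.log_two_gt_d9
  have hlog2' : Real.log 2 < 0.6931471808 := Real.log_two_lt_d9
  -- log p ≥ 1 - 1/p
  have hinv : Real.log p⁻¹ ≤ p⁻¹ - 1 := Real.log_le_sub_one_of_pos (by positivity)
  rw [Real.log_inv] at hinv
  have hlogp : 1 - p⁻¹ ≤ Real.log p := by linarith
  have hlogp0 : Real.log p ≤ 0 := Real.log_nonpos (le_of_lt hp0) (le_of_lt h1)
  have key : 4 * Real.log 2 * (p - 1) ≤ 4 * p * Real.log 2 * Real.log p := by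
    have h4 : 0 < 4 * p * Real.log 2 := by positivity
    have := mul_le_mul_of_nonneg_left hlogp (le_of_lt h4)
    calc 4 * Real.log 2 * (p - 1) = 4 * p * Real.log 2 * (1 - p⁻¹) := by
          field_simp
      _ ≤ 4 * p * Real.log 2 * Real.log p := this
  have h9' : (0.9:ℝ) ≤ p := h9
  nlinarith [key, hlog2, mul_le_mul_of_nonneg_right h9' (show (0:ℝ) ≤ 6 * Real.log 2 - 2 by nlinarith)]

private lemma deriv_aux (p : ℝ) (hp0 : 0 < p) :
    HasDerivAt (fun p : ℝ => p - p ^ 2 + 2 * p ^ 2 * Real.log 2 * Real.log p)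
      (1 - 2 * p + 2 * p * Real.log 2 + 4 * p * Real.log 2 * Real.log p) p := by
  have hlog : HasDerivAt Real.log p⁻¹ p := Real.hasDerivAt_log (ne_of_gt hp0)
  have h := ((hasDerivAt_id p).sub (hasDerivAt_pow 2 p)).add
    ((((hasDerivAt_pow 2 p).const_mul 2).mul_const (Real.log 2)).mul hlog)
  refine h.congr_deriv ?_
  field_simp
  ring

theorem stmt_15 :
    (∀ p ∈ Set.Ico (0.9:ℝ) 1,
      p - p ^ 2 + 2 * p ^ 2 * Real.log 2 * Real.log p < 0) ∧
    StrictMonoOn (fun p : ℝ => p - p ^ 2 + 2 * p ^ 2 * Real.log 2 * Real.log p)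
      (Set.Ico 0.9 1) ∧
    (∀ p ∈ Set.Ico (0.9:ℝ) 1,
      HasDerivAt (fun p : ℝ => p - p ^ 2 + 2 * p ^ 2 * Real.log 2 * Real.log p)
        (1 - 2 * p + 2 * p * Real.log 2 + 4 * p * Real.log 2 * Real.log p) p ∧
      0 < 1 - 2 * p + 2 * p * Real.log 2 + 4 * p * Real.log 2 * Real.log p) ∧
    Filter.Tendsto (fun p : ℝ => p - p ^ 2 + 2 * p ^ 2 * Real.log 2 * Real.log p)
      (nhdsWithin 1 (Set.Iio 1)) (nhds 0) := by
  set f : ℝ → ℝ := fun p => p - p ^ 2 + 2 * p ^ 2 * Real.log 2 * Real.log p with hf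
  have hcont : ∀ x : ℝ, 0 < x → ContinuousAt f x := by
    intro x hx
    exact (deriv_aux x hx).continuousAt
  have hmono : StrictMonoOn f (Set.Ico (0.9:ℝ) 1) := by
    apply strictMonoOn_of_deriv_pos (convex_Ico _ _)
    · intro x hx
      exact (hcont x (by have := hx.1; norm_num at this ⊢; linarith)).continuousWithinAt
    · intro x hx
      rw [interior_Ico] at hx
      have hx' : x ∈ Set.Ico (0.9:ℝ) 1 := ⟨le_of_lt hx.1, hx.2⟩
      rw [(deriv_aux x (by have := hx'.1; norm_num at this ⊢; linarith)).deriv]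
      exact deriv_pos_aux x hx'
  have htend : Filter.Tendsto f (nhdsWithin 1 (Set.Iio 1)) (nhds 0) := by
    have h1 : ContinuousAt f 1 := hcont 1 one_pos
    have := h1.tendsto.mono_left (nhdsWithin_le_nhds (s := Set.Iio 1))
    simpa [hf, Real.log_one] using this
  refine ⟨?_, hmono, fun p hp => ⟨deriv_aux p (by have := hp.1; norm_num at this ⊢; linarith), deriv_pos_aux p hp⟩, htend⟩
  intro p hp
  obtain ⟨h9, h1⟩ := hp
  set q : ℝ := (p + 1) / 2 with hq
  have hq9 : (0.9:ℝ) ≤ q := by rw [hq]; norm_num at h9 ⊢; linarith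
  have hq1 : q < 1 := by rw [hq]; linarith
  have hpq : p < q := by rw [hq]; linarith
  have hfq : f q ≤ 0 := by
    refine ge_of_tendsto htend ?_
    filter_upwards [Ioo_mem_nhdsLT_of_mem (show (1:ℝ) ∈ Set.Ioc q 1 from ⟨hq1, le_refl _⟩)]
      with x hx
    exact le_of_lt (hmono ⟨hq9, hq1⟩ ⟨by norm_num at hq9 ⊢; linarith [hx.1], hx.2⟩ hx.1)
  have := hmono ⟨h9, h1⟩ ⟨hq9, hq1⟩ hpq
  calc f p < f q := this
    _ ≤ 0 := hfq
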